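/- arXiv:1810.06697 — 2 statements merged into one kernel-verified Lean document; each statement's English description precedes it below -/
import Mathlib

section
/- Let D be an n×n real symmetric positive definite matrix and J a k×n real matrix of full row rank k. Define proj := I − Jᵀ (J D⁻¹ Jᵀ)⁻¹ J D⁻¹, and for F ∈ ℝⁿ, c ∈ ℝᵏ set F_v := proj·F + Jᵀ (J D⁻¹ Jᵀ)⁻¹ c. Then for every τ ∈ ℝⁿ, the acceleration a := D⁻¹ (proj·τ − F_v) satisfies J a + c = 0. In other words, the constrained dynamics automatically satisfies the acceleration-level constraint for every choice of input. -/
open Matrix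

/-- If `J` has full row rank, then `mulVec Jᵀ` is injective. -/
lemma aux_transpose_mulVec_injective {n k : ℕ} (J : Matrix (Fin k) (Fin n) ℝ)
    (hJ : J.rank = k) : Function.Injective (Jᵀ.mulVecLin) := by
  rw [← LinearMap.ker_eq_bot]
  have hr : Jᵀ.rank = k := by rw [Matrix.rank_transpose]; exact hJ
  have h := LinearMap.finrank_range_add_finrank_ker (Jᵀ.mulVecLin)
  rw [show Module.finrank ℝ (Fin k → ℝ) = k by simp] at h
  have hrange : Module.finrank ℝ (LinearMap.range Jᵀ.mulVecLin) = k := hr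
  rw [hrange] at h
  have : Module.finrank ℝ (LinearMap.ker Jᵀ.mulVecLin) = 0 := by omega
  exact Submodule.finrank_eq_zero.mp this

lemma aux_S_posdef {n k : ℕ}
    (D : Matrix (Fin n) (Fin n) ℝ) (hD : D.PosDef)
    (J : Matrix (Fin k) (Fin n) ℝ) (hJ : J.rank = k) :
    (J * D⁻¹ * Jᵀ).PosDef := by
  have hM : (D⁻¹).PosDef := hD.inv
  rw [Matrix.posDef_iff_dotProduct_mulVec]
  constructor
  · have h1 : Jᵀ = Jᴴ := (conjTranspose_eq_transpose_of_trivial J).symm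
    rw [h1]
    exact isHermitian_mul_mul_conjTranspose J hM.isHermitian
  · intro x hx
    have hxJ : Jᵀ *ᵥ x ≠ 0 := by
      intro h
      apply hx
      have := aux_transpose_mulVec_injective J hJ (a₁ := x) (a₂ := 0)
      simp only [Matrix.mulVecLin_apply, Matrix.mulVec_zero] at this
      exact this h
    have key := hM.dotProduct_mulVec_pos hxJ
    have : star x ⬝ᵥ (J * D⁻¹ * Jᵀ) *ᵥ x
        = star (Jᵀ *ᵥ x) ⬝ᵥ D⁻¹ *ᵥ (Jᵀ *ᵥ x) := by
      rw [star_trivial, star_trivial, ← Matrix.mulVec_mulVec, ← Matrix.mulVec_mulVec,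
        Matrix.dotProduct_mulVec, Matrix.mulVec_transpose]
    rw [this]
    exact key

/-- The constrained dynamics automatically satisfies the acceleration-level constraint:
with `proj := I - Jᵀ (J D⁻¹ Jᵀ)⁻¹ J D⁻¹` and `F_v := proj · F + Jᵀ (J D⁻¹ Jᵀ)⁻¹ c`, the
acceleration `a := D⁻¹ (proj · τ - F_v)` satisfies `J a + c = 0` for every input `τ`. -/
theorem constrained_dynamics_satisfies_constraint {n k : ℕ}
    (D : Matrix (Fin n) (Fin n) ℝ) (hD : D.PosDef)
    (J : Matrix (Fin k) (Fin n) ℝ) (hJ : J.rank = k)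
    (F : Fin n → ℝ) (c : Fin k → ℝ) (τ : Fin n → ℝ) :
    J *ᵥ (D⁻¹ *ᵥ ((1 - Jᵀ * (J * D⁻¹ * Jᵀ)⁻¹ * J * D⁻¹) *ᵥ τ
        - ((1 - Jᵀ * (J * D⁻¹ * Jᵀ)⁻¹ * J * D⁻¹) *ᵥ F
            + (Jᵀ * (J * D⁻¹ * Jᵀ)⁻¹) *ᵥ c))) + c = 0 := by
  have hS : IsUnit (J * D⁻¹ * Jᵀ).det :=
    Matrix.isUnit_iff_isUnit_det _ |>.mp (aux_S_posdef D hD J hJ).isUnit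
  have hSS : (J * D⁻¹ * Jᵀ) * (J * D⁻¹ * Jᵀ)⁻¹ = 1 := Matrix.mul_nonsing_inv _ hS
  have hc : (J * D⁻¹) * (Jᵀ * (J * D⁻¹ * Jᵀ)⁻¹) = 1 := by
    simp only [Matrix.mul_assoc] at hSS ⊢
    exact hSS
  have hproj : (J * D⁻¹) * (1 - Jᵀ * (J * D⁻¹ * Jᵀ)⁻¹ * J * D⁻¹) = 0 := by
    rw [Matrix.mul_sub, Matrix.mul_one]
    rw [show Jᵀ * (J * D⁻¹ * Jᵀ)⁻¹ * J * D⁻¹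
        = (Jᵀ * (J * D⁻¹ * Jᵀ)⁻¹) * (J * D⁻¹) by
      simp only [Matrix.mul_assoc]]
    rw [← Matrix.mul_assoc, hc, Matrix.one_mul, sub_self]
  rw [Matrix.mulVec_mulVec]
  rw [Matrix.mulVec_sub, Matrix.mulVec_add]
  rw [Matrix.mulVec_mulVec, Matrix.mulVec_mulVec, Matrix.mulVec_mulVec]
  rw [hproj, hc]
  simp
end

section
/- Let Ψ be an n×n real matrix. Suppose there exist an n×n real symmetric positive definite matrix W and a real number γ > 0 such that the block matrix [[W, Ψ W], [W Ψᵀ, (1−γ) W]] is positive definite. Then γ < 1 and every complex eigenvalue λ of Ψ satisfies |λ| ≤ √(1−γ) < 1; in particular all eigenvalues of Ψ lie strictly inside the unit circle of the complex plane. -/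
open Matrix

lemma key_dot {n : ℕ} (M : Matrix (Fin n) (Fin n) ℝ) (u w : Fin n → ℝ) :
    (fun i => (u i : ℂ)) ⬝ᵥ (M.map Complex.ofReal) *ᵥ (fun i => (w i : ℂ))
      = ((u ⬝ᵥ M *ᵥ w : ℝ) : ℂ) := by
  have h1 : ((u ⬝ᵥ M *ᵥ w : ℝ) : ℂ) = Complex.ofRealHom (u ⬝ᵥ M *ᵥ w) := rfl
  rw [h1, RingHom.map_dotProduct]
  congr 1
  funext i
  exact (RingHom.map_mulVec Complex.ofRealHom M w i).symm

lemma sym_dot {n : ℕ} {M : Matrix (Fin n) (Fin n) ℝ} (hM : M.IsHermitian)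
    (a b : Fin n → ℝ) : a ⬝ᵥ M *ᵥ b = b ⬝ᵥ M *ᵥ a := by
  have hT : Mᵀ = M := by
    ext i j
    simpa using congrFun (congrFun hM.eq i) j
  calc a ⬝ᵥ M *ᵥ b = (M *ᵥ b) ⬝ᵥ a := dotProduct_comm _ _
    _ = (b ᵥ* Mᵀ) ⬝ᵥ a := by rw [vecMul_transpose]
    _ = (b ᵥ* M) ⬝ᵥ a := by rw [hT]
    _ = b ⬝ᵥ M *ᵥ a := (dotProduct_mulVec _ _ _).symm

open ComplexOrder in
lemma posDef_map_complex {n : ℕ} {M : Matrix (Fin n) (Fin n) ℝ} (hM : M.PosDef) :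
    (M.map Complex.ofReal).PosDef := by
  refine PosDef.of_dotProduct_mulVec_pos ?_ ?_
  · ext i j
    have h := congrFun (congrFun hM.1 i) j
    simp only [conjTranspose_apply, map_apply, star_trivial] at h ⊢
    rw [Complex.star_def, Complex.conj_ofReal]
    exact_mod_cast h
  · intro x hx
    set a : Fin n → ℝ := fun i => (x i).re with ha
    set b : Fin n → ℝ := fun i => (x i).im with hb
    set av : Fin n → ℂ := fun i => (a i : ℂ) with hav
    set bv : Fin n → ℂ := fun i => (b i : ℂ) with hbv
    have hxab : x = av + Complex.I • bv := by
      funext i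
      simp only [Pi.add_apply, Pi.smul_apply, hav, hbv, ha, hb, smul_eq_mul]
      rw [mul_comm]
      exact (Complex.re_add_im (x i)).symm
    have hstar : star x = av + (-Complex.I) • bv := by
      rw [hxab]
      funext i
      simp [Complex.ext_iff, hav, hbv]
    have hsym := sym_dot hM.1 a b
    have expand : star x ⬝ᵥ (M.map Complex.ofReal) *ᵥ x
        = ((a ⬝ᵥ M *ᵥ a + b ⬝ᵥ M *ᵥ b : ℝ) : ℂ) := by
      rw [hstar]
      nth_rewrite 1 [hxab]
      rw [mulVec_add, mulVec_smul, add_dotProduct, smul_dotProduct, dotProduct_add,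
        dotProduct_add, dotProduct_smul, dotProduct_smul, key_dot, key_dot, key_dot, key_dot]
      rw [hsym]
      simp only [smul_eq_mul]
      ring_nf
      rw [Complex.I_sq]
      push_cast
      ring
    rw [expand]
    rw [Complex.zero_lt_real]
    have hab : a ≠ 0 ∨ b ≠ 0 := by
      by_contra h
      push_neg at h
      apply hx
      funext i
      have h1 : a i = 0 := congrFun h.1 i
      have h2 : b i = 0 := congrFun h.2 i
      exact Complex.ext h1 h2
    rcases hab with h | h
    · have := hM.dotProduct_mulVec_pos h
      have h2 := hM.posSemidef.dotProduct_mulVec_nonneg b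
      simp only [star_trivial] at this h2
      linarith
    · have := hM.dotProduct_mulVec_pos h
      have h2 := hM.posSemidef.dotProduct_mulVec_nonneg a
      simp only [star_trivial] at this h2
      linarith

lemma schur_posdef {n : ℕ} {W B D : Matrix (Fin n) (Fin n) ℝ} (hW : W.PosDef)
    [Invertible W]
    (h : (Matrix.fromBlocks W B Bᴴ D).PosDef) :
    (D - Bᴴ * W⁻¹ * B).PosDef := by
  refine PosDef.of_dotProduct_mulVec_pos ?_ ?_
  · exact (Matrix.IsHermitian.fromBlocks₁₁ B D hW.1).mp h.1
  · intro y hy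
    have hz : (-((W⁻¹ * B) *ᵥ y) ⊕ᵥ y) ≠ 0 := by
      intro h0
      apply hy
      funext i
      exact congrFun h0 (Sum.inr i)
    have hq := h.dotProduct_mulVec_pos hz
    rw [dotProduct_mulVec, schur_complement_eq₁₁ B D _ _ hW.1, neg_add_cancel] at hq
    simpa [dotProduct_mulVec] using hq

open ComplexOrder in
lemma eigen_bound {n : ℕ} {Ψ W : Matrix (Fin n) (Fin n) ℝ} (hW : W.PosDef)
    {γ : ℝ} (hS : (((1 - γ) • W) - (W * Ψᵀ) * W⁻¹ * (Ψ * W)).PosDef)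
    {μ : ℂ} {v : Fin n → ℂ} (hv0 : v ≠ 0)
    (hv : (Ψ.map Complex.ofReal) *ᵥ v = μ • v) :
    Complex.normSq μ < 1 - γ := by
  set Ψc := Ψ.map Complex.ofReal with hΨcdef
  set Wc := W.map Complex.ofReal with hWcdef
  have hmul : ∀ (M N : Matrix (Fin n) (Fin n) ℝ),
      (M * N).map Complex.ofReal = M.map Complex.ofReal * N.map Complex.ofReal :=
    fun M N => Matrix.map_mul (f := Complex.ofRealHom)
  have hone : (1 : Matrix (Fin n) (Fin n) ℝ).map Complex.ofReal = 1 :=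
    Matrix.map_one _ Complex.ofReal_zero Complex.ofReal_one
  have hWdet : IsUnit W.det := isUnit_iff_ne_zero.mpr hW.det_pos.ne'
  haveI := W.invertibleOfIsUnitDet hWdet
  set Vc := (W⁻¹).map Complex.ofReal with hVcdef
  have hWV : Wc * Vc = 1 := by
    rw [hWcdef, hVcdef, ← hmul, Matrix.mul_nonsing_inv _ hWdet, hone]
  have hVW : Vc * Wc = 1 := by
    rw [hWcdef, hVcdef, ← hmul, Matrix.nonsing_inv_mul _ hWdet, hone]
  set x := Vc *ᵥ v with hxdef
  have hWx : Wc *ᵥ x = v := by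
    rw [hxdef, mulVec_mulVec, hWV, one_mulVec]
  have hx0 : x ≠ 0 := by
    intro h0
    exact hv0 (by rw [← hWx, h0, mulVec_zero])
  have hWcd : Wc.PosDef := posDef_map_complex hW
  -- mapped Schur complement
  have hmap : (((1 - γ) • W) - (W * Ψᵀ) * W⁻¹ * (Ψ * W)).map Complex.ofReal
      = ((1 - γ) • Wc) - (Wc * Ψcᵀ) * Vc * (Ψc * Wc) := by
    rw [Matrix.map_sub _ (fun a b => Complex.ofReal_sub a b)]
    congr 1
    · exact Matrix.map_smul _ _ (fun a => by simp [Complex.real_smul]) W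
    · rw [hmul, hmul, hmul, hmul, Matrix.transpose_map]
  have hSc : (((1 - γ) • Wc) - (Wc * Ψcᵀ) * Vc * (Ψc * Wc)).PosDef := by
    rw [← hmap]; exact posDef_map_complex hS
  -- quadratic form computation
  have hΨWx : (Ψc * Wc) *ᵥ x = μ • v := by rw [← mulVec_mulVec, hWx, hv]
  have hVv : Vc *ᵥ (μ • v) = μ • x := by
    rw [mulVec_smul, hxdef]
  have hmid : ((Wc * Ψcᵀ) * Vc * (Ψc * Wc)) *ᵥ x = μ • ((Wc * Ψcᵀ) *ᵥ x) := by
    rw [← mulVec_mulVec, ← mulVec_mulVec, hΨWx, hVv, mulVec_smul]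
  have hxW : star x ᵥ* Wc = star v := by
    rw [← hWcd.1.eq, ← star_mulVec, hWx]
  have hΨH : Ψcᴴ = Ψcᵀ := by
    ext i j
    simp [conjTranspose_apply, Matrix.map_apply, Complex.star_def, Complex.conj_ofReal, hΨcdef]
  set t := star x ⬝ᵥ Wc *ᵥ x with htdef
  have hvx : star v ⬝ᵥ x = t := by
    rw [htdef]
    conv_rhs => rw [dotProduct_mulVec, hxW]
  have hterm : star x ⬝ᵥ ((Wc * Ψcᵀ) *ᵥ x) = (starRingEnd ℂ) μ * t := by
    rw [dotProduct_mulVec, ← vecMul_vecMul, hxW, ← hΨH, ← star_mulVec, hv]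
    rw [star_smul, smul_dotProduct, hvx]
    simp
  have hq := hSc.dotProduct_mulVec_pos hx0
  have hqval : star x ⬝ᵥ (((1 - γ) • Wc) - (Wc * Ψcᵀ) * Vc * (Ψc * Wc)) *ᵥ x
      = (((1 - γ) - Complex.normSq μ : ℝ) : ℂ) * t := by
    rw [sub_mulVec, dotProduct_sub, smul_mulVec, dotProduct_smul, hmid,
      dotProduct_smul, hterm]
    rw [← htdef, Complex.real_smul, smul_eq_mul,
      show μ * ((starRingEnd ℂ) μ * t) = μ * (starRingEnd ℂ) μ * t by ring,
      Complex.mul_conj]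
    push_cast
    ring
  rw [hqval] at hq
  have ht := hWcd.dotProduct_mulVec_pos hx0
  rw [← htdef] at ht
  rw [Complex.lt_def] at hq ht
  simp only [Complex.zero_re, Complex.zero_im] at hq ht
  have him : t.im = 0 := ht.2.symm
  have hre : 0 < ((1 - γ) - Complex.normSq μ) * t.re := by
    have h := hq.1
    rw [Complex.mul_re, Complex.ofReal_re, Complex.ofReal_im, him] at h
    simpa using h
  nlinarith [ht.1, hre]

/-- Feasibility of the NMI implies Schur stability: if there exist a symmetric positive
definite `W` and `γ > 0` with `[[W, Ψ W], [W Ψᵀ, (1-γ) W]] ≻ 0`, then `γ < 1` and every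
complex eigenvalue `μ` of `Ψ` satisfies `|μ| ≤ √(1-γ) < 1`; in particular all eigenvalues
of `Ψ` lie strictly inside the unit circle. -/
theorem nmi_implies_schur_stable {n : ℕ} (hn : 0 < n)
    (Ψ : Matrix (Fin n) (Fin n) ℝ)
    (W : Matrix (Fin n) (Fin n) ℝ) (hW : W.PosDef)
    (γ : ℝ) (hγ : 0 < γ)
    (hnmi : (Matrix.fromBlocks W (Ψ * W) (W * Ψᵀ) ((1 - γ) • W)).PosDef) :
    γ < 1 ∧ Real.sqrt (1 - γ) < 1 ∧
      ∀ μ ∈ spectrum ℂ (Ψ.map (Complex.ofReal)), ‖μ‖ ≤ Real.sqrt (1 - γ) := by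
  have hWdet : IsUnit W.det := isUnit_iff_ne_zero.mpr hW.det_pos.ne'
  haveI := W.invertibleOfIsUnitDet hWdet
  have hBH : W * Ψᵀ = (Ψ * W)ᴴ := by
    rw [conjTranspose_mul]
    congr 1
    exact hW.1.symm
  rw [hBH] at hnmi
  have hS0 : (((1 - γ) • W) - (Ψ * W)ᴴ * W⁻¹ * (Ψ * W)).PosDef := schur_posdef hW hnmi
  rw [← hBH] at hS0
  -- γ < 1
  have hγ1 : γ < 1 := by
    set e : Fin n → ℝ := fun _ => 1 with he
    have hne : e ≠ 0 := by
      intro h0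
      have := congrFun h0 ⟨0, hn⟩
      simp [he] at this
    have h1 := hS0.dotProduct_mulVec_pos hne
    have hq : star e ⬝ᵥ (((1 - γ) • W) - (W * Ψᵀ) * W⁻¹ * (Ψ * W)) *ᵥ e
        = (1 - γ) * (e ⬝ᵥ W *ᵥ e) - (e ⬝ᵥ ((W * Ψᵀ) * W⁻¹ * (Ψ * W)) *ᵥ e) := by
      rw [star_trivial, sub_mulVec, dotProduct_sub, smul_mulVec, dotProduct_smul,
        smul_eq_mul]
    rw [hq] at h1
    have hp := hW.dotProduct_mulVec_pos hne
    rw [star_trivial] at hp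
    have hc := (hW.inv.posSemidef.conjTranspose_mul_mul_same (Ψ * W)).dotProduct_mulVec_nonneg e
    rw [star_trivial, ← hBH] at hc
    nlinarith
  have h1γ : 0 < 1 - γ := by linarith
  have hsq : Real.sqrt (1 - γ) < 1 := by
    have h := Real.sqrt_lt_sqrt h1γ.le (by linarith : 1 - γ < 1)
    simpa using h
  refine ⟨hγ1, hsq, ?_⟩
  intro μ hμ
  have hnu := spectrum.mem_iff.mp hμ
  have hdet : (algebraMap ℂ (Matrix (Fin n) (Fin n) ℂ) μ - Ψ.map Complex.ofReal).det = 0 := by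
    by_contra hd
    exact hnu ((Matrix.isUnit_iff_isUnit_det _).mpr (isUnit_iff_ne_zero.mpr hd))
  obtain ⟨v, hv0, hveq⟩ := (Matrix.exists_mulVec_eq_zero_iff).mpr hdet
  have hv : (Ψ.map Complex.ofReal) *ᵥ v = μ • v := by
    rw [Algebra.algebraMap_eq_smul_one, sub_mulVec, smul_mulVec, one_mulVec,
      sub_eq_zero] at hveq
    exact hveq.symm
  have hns := eigen_bound hW hS0 hv0 hv
  rw [Complex.norm_def]
  exact Real.sqrt_le_sqrt hns.le
end
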